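/- Let Q be a compact polyhedron and let G : Q → (ℝ^m)³ ∖ (Δ^{1=2} ∪ Δ^{2=3} ∪ Δ^{3=1}) be a map such that its composition with each projection p_i forgetting the i-th point, p_i : (ℝ^m)³ ∖ (⋃ Δ^{i=j}) → (ℝ^m)² ∖ Δ, is null-homotopic. Then there exists a hexagonal ∂I³-homotopy H_T : Q → (ℝ^m)³ ∖ Δ^{1=2=3} with H_{(0,0,0)} = G and H_{(1,1,1)} a constant map into (ℝ^m)³ ∖ (Δ^{1=2} ∪ Δ^{2=3} ∪ Δ^{3=1}). -/

import Mathlib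

/-!
# Statement 8 (Lemma 2.4)

Let `Q` be a compact polyhedron and `G : Q → (ℝ^m)³ ∖ (Δ^{1=2} ∪ Δ^{2=3} ∪ Δ^{3=1})`
a map whose composition with each of the three projections
`pᵢ : (ℝ^m)³ ∖ ⋃ Δ^{i=j} → (ℝ^m)² ∖ Δ` (forgetting the `i`-th point) is
null-homotopic.  Then there is a hexagonal `∂I³`-homotopy
`H_T : Q → (ℝ^m)³ ∖ Δ^{1=2=3}` with `H_{(0,0,0)} = G` and `H_{(1,1,1)}` a constant
map into `(ℝ^m)³ ∖ (Δ^{1=2} ∪ Δ^{2=3} ∪ Δ^{3=1})`.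

(`Q` is taken to be a compact Hausdorff space; polyhedrality is not formalizable in
current Mathlib.)
-/

open Metric Set unitInterval

noncomputable section

abbrev E (m : ℕ) : Type := EuclideanSpace ℝ (Fin m)

/-- The complement of all three partial diagonals in `(ℝ^m)³`:
triples of pairwise distinct points. -/
def Conf3 (m : ℕ) : Set (E m × E m × E m) :=
  {p | p.1 ≠ p.2.1 ∧ p.2.1 ≠ p.2.2 ∧ p.1 ≠ p.2.2}

/-- The complement of the diagonal in `(ℝ^m)²`. -/
def Conf2 (m : ℕ) : Set (E m × E m) := {q | q.1 ≠ q.2}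

/-- The complement of the thin diagonal `Δ^{1=2=3}` in `(ℝ^m)³`. -/
def ThinDiagCompl (m : ℕ) : Set (E m × E m × E m) :=
  {p | ¬ (p.1 = p.2.1 ∧ p.2.1 = p.2.2)}

/-- `p₁`: forget the first point of the configuration. -/
def proj1 (m : ℕ) : C(Conf3 m, Conf2 m) :=
  ⟨fun p => ⟨(p.1.2.1, p.1.2.2), p.2.2.1⟩,
    (Continuous.prodMk (continuous_subtype_val.snd.fst)
      (continuous_subtype_val.snd.snd)).subtype_mk _⟩

/-- `p₂`: forget the second point of the configuration. -/
def proj2 (m : ℕ) : C(Conf3 m, Conf2 m) :=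
  ⟨fun p => ⟨(p.1.1, p.1.2.2), p.2.2.2⟩,
    (Continuous.prodMk (continuous_subtype_val.fst)
      (continuous_subtype_val.snd.snd)).subtype_mk _⟩

/-- `p₃`: forget the third point of the configuration. -/
def proj3 (m : ℕ) : C(Conf3 m, Conf2 m) :=
  ⟨fun p => ⟨(p.1.1, p.1.2.1), p.2.1⟩,
    (Continuous.prodMk (continuous_subtype_val.fst)
      (continuous_subtype_val.snd.fst)).subtype_mk _⟩

/-- The boundary `∂I³` of the cube `I³`. -/
def BdryCube : Type :=
  {T : I × I × I // T.1 = 0 ∨ T.1 = 1 ∨ T.2.1 = 0 ∨ T.2.1 = 1 ∨ T.2.2 = 0 ∨ T.2.2 = 1}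

instance : TopologicalSpace BdryCube := by unfold BdryCube; infer_instance

/-- The vertex `(0,0,0) ∈ ∂I³`. -/
def corner0 : BdryCube := ⟨(0, 0, 0), Or.inl rfl⟩

/-- The vertex `(1,1,1) ∈ ∂I³`. -/
def corner1 : BdryCube := ⟨(1, 1, 1), Or.inr (Or.inl rfl)⟩

/-- A `∂I³`-family `H : Q × ∂I³ → (ℝ^m)³ ∖ Δ^{1=2=3}` is *hexagonal* if
`H_T(Q) ∩ Δ^{i=j} = ∅` whenever `T` lies on either of the faces `t_k = 0`, `t_k = 1`
(`{i,j,k} = {1,2,3}`), and `H_T(Q) ⊆ (ℝ^m)³ ∖ (Δ^{1=2} ∪ Δ^{2=3} ∪ Δ^{3=1})`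
whenever `T` lies on an edge `t_i = t_j = 0` or `t_i = t_j = 1`. -/
def IsHexagonal {Q : Type} [TopologicalSpace Q] {m : ℕ}
    (H : C(Q × BdryCube, ThinDiagCompl m)) : Prop :=
  -- faces `t₃ ∈ {0,1}` avoid `Δ^{1=2}`:
  (∀ q (T : BdryCube), T.1.2.2 = 0 ∨ T.1.2.2 = 1 →
    (H (q, T)).1.1 ≠ (H (q, T)).1.2.1) ∧
  -- faces `t₁ ∈ {0,1}` avoid `Δ^{2=3}`:
  (∀ q (T : BdryCube), T.1.1 = 0 ∨ T.1.1 = 1 →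
    (H (q, T)).1.2.1 ≠ (H (q, T)).1.2.2) ∧
  -- faces `t₂ ∈ {0,1}` avoid `Δ^{3=1}`:
  (∀ q (T : BdryCube), T.1.2.1 = 0 ∨ T.1.2.1 = 1 →
    (H (q, T)).1.1 ≠ (H (q, T)).1.2.2) ∧
  -- on edges `t_i = t_j = 0` and `t_i = t_j = 1`, all diagonals are avoided:
  (∀ q (T : BdryCube),
    ((T.1.1 = 0 ∧ T.1.2.1 = 0) ∨ (T.1.1 = 1 ∧ T.1.2.1 = 1) ∨
     (T.1.1 = 0 ∧ T.1.2.2 = 0) ∨ (T.1.1 = 1 ∧ T.1.2.2 = 1) ∨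
     (T.1.2.1 = 0 ∧ T.1.2.2 = 0) ∨ (T.1.2.1 = 1 ∧ T.1.2.2 = 1)) →
    (H (q, T)).1 ∈ Conf3 m)

set_option linter.unusedSectionVars false

namespace HexAux

variable {m : ℕ} {Q : Type} [TopologicalSpace Q]

/-- Forward-then-backward reparametrized homotopy track in `Conf2`. -/
def pear {f g : C(Q, Conf2 m)} (h : f.Homotopy g) (q0 q : Q) (s : ℝ) : E m × E m :=
  if s ≤ 1/2 then (h (Set.projIcc 0 1 zero_le_one (2*s), q)).val
  else (h (Set.projIcc 0 1 zero_le_one (2-2*s), q0)).val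

lemma pear_ne {f g : C(Q, Conf2 m)} (h : f.Homotopy g) (q0 q : Q) (s : ℝ) :
    (pear h q0 q s).1 ≠ (pear h q0 q s).2 := by
  unfold pear; split_ifs
  · exact (h _).2
  · exact (h _).2

lemma projIcc_zero {h01 : (0:ℝ) ≤ 1} : Set.projIcc (0:ℝ) 1 h01 0 = (0:I) := by
  rw [Set.projIcc_left]; rfl

lemma projIcc_one {h01 : (0:ℝ) ≤ 1} : Set.projIcc (0:ℝ) 1 h01 1 = (1:I) := by
  rw [Set.projIcc_right]; rfl

lemma pear_zero {f g : C(Q, Conf2 m)} (h : f.Homotopy g) (q0 q : Q) :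
    pear h q0 q 0 = (f q).val := by
  unfold pear
  rw [if_pos (by norm_num : (0:ℝ) ≤ 1/2), mul_zero, projIcc_zero, h.apply_zero]

lemma pear_one {f g : C(Q, Conf2 m)} (h : f.Homotopy g) (q0 q : Q) :
    pear h q0 q 1 = (f q0).val := by
  unfold pear
  rw [if_neg (by norm_num : ¬ (1:ℝ) ≤ 1/2), show (2:ℝ) - 2*1 = 0 by norm_num,
    projIcc_zero, h.apply_zero]

lemma pear_cont {f g : C(Q, Conf2 m)} (h : f.Homotopy g) (q0 : Q)
    (hg : ∀ q, g q = g q0) :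
    Continuous (fun p : Q × ℝ => pear h q0 p.1 p.2) := by
  apply Continuous.if_le
  · exact continuous_subtype_val.comp (h.continuous.comp
      ((continuous_projIcc.comp (continuous_const.mul continuous_snd)).prodMk continuous_fst))
  · exact continuous_subtype_val.comp (h.continuous.comp
      ((continuous_projIcc.comp
        (continuous_const.sub (continuous_const.mul continuous_snd))).prodMk continuous_const))
  · exact continuous_snd
  · exact continuous_const
  · intro p hp
    simp only [hp]
    norm_num [projIcc_one, ContinuousMap.Homotopy.apply_one]
    rw [hg p.1]


/-! ### Scalar fields on the cube -/

def phi (t : I) : ℝ := t * (1 - t)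

lemma phi_nonneg (t : I) : 0 ≤ phi t := mul_nonneg t.2.1 (by linarith [t.2.2])

lemma phi_cont : Continuous phi :=
  continuous_subtype_val.mul (continuous_const.sub continuous_subtype_val)

lemma phi_eq_zero {t : I} (h : (t:ℝ) = 0 ∨ (t:ℝ) = 1) : phi t = 0 := by
  unfold phi; rcases h with h | h <;> rw [h] <;> ring

lemma phi_zero_cases {t : I} (h : phi t = 0) : (t:ℝ) = 0 ∨ (t:ℝ) = 1 := by
  unfold phi at h
  rcases mul_eq_zero.mp h with h | h
  · exact Or.inl h
  · right; linarith

def SS (T : I × I × I) : ℝ := phi T.1 + phi T.2.1 + phi T.2.2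

lemma SS_cont : Continuous SS :=
  ((phi_cont.comp continuous_fst).add
    (phi_cont.comp (continuous_fst.comp continuous_snd))).add
    (phi_cont.comp (continuous_snd.comp continuous_snd))

lemma SS_nonneg (T : I × I × I) : 0 ≤ SS T :=
  add_nonneg (add_nonneg (phi_nonneg _) (phi_nonneg _)) (phi_nonneg _)

lemma SS_zero {T : I × I × I} (h : SS T = 0) :
    phi T.1 = 0 ∧ phi T.2.1 = 0 ∧ phi T.2.2 = 0 := by
  have h1 := phi_nonneg T.1; have h2 := phi_nonneg T.2.1; have h3 := phi_nonneg T.2.2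
  unfold SS at h
  exact ⟨by linarith, by linarith, by linarith⟩

def gam (T : I × I × I) : ℝ :=
  min (max (T.1:ℝ) (T.2.1:ℝ)) (min (max (T.2.1:ℝ) (T.2.2:ℝ)) (max (T.1:ℝ) (T.2.2:ℝ)))

lemma gam_cont : Continuous gam := by
  have c1 : Continuous fun T : I×I×I => (T.1:ℝ) := continuous_subtype_val.comp continuous_fst
  have c2 : Continuous fun T : I×I×I => (T.2.1:ℝ) :=
    continuous_subtype_val.comp (continuous_fst.comp continuous_snd)
  have c3 : Continuous fun T : I×I×I => (T.2.2:ℝ) :=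
    continuous_subtype_val.comp (continuous_snd.comp continuous_snd)
  exact (c1.max c2).min ((c2.max c3).min (c1.max c3))

lemma gam_nonneg (T : I × I × I) : 0 ≤ gam T :=
  le_min (le_max_of_le_left T.1.2.1) (le_min (le_max_of_le_left T.2.1.2.1)
    (le_max_of_le_left T.1.2.1))

lemma gam_le_one (T : I × I × I) : gam T ≤ 1 :=
  (min_le_left _ _).trans (max_le T.1.2.2 T.2.1.2.2)

lemma gam_eq_zero_12 {T : I × I × I} (h1 : (T.1:ℝ) = 0) (h2 : (T.2.1:ℝ) = 0) : gam T = 0 :=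
  le_antisymm ((min_le_left _ _).trans (by rw [h1, h2]; norm_num)) (gam_nonneg T)

lemma gam_eq_zero_23 {T : I × I × I} (h2 : (T.2.1:ℝ) = 0) (h3 : (T.2.2:ℝ) = 0) : gam T = 0 :=
  le_antisymm ((min_le_right _ _).trans ((min_le_left _ _).trans
    (by rw [h2, h3]; norm_num))) (gam_nonneg T)

lemma gam_eq_zero_13 {T : I × I × I} (h1 : (T.1:ℝ) = 0) (h3 : (T.2.2:ℝ) = 0) : gam T = 0 :=
  le_antisymm ((min_le_right _ _).trans ((min_le_right _ _).trans
    (by rw [h1, h3]; norm_num))) (gam_nonneg T)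

lemma gam_eq_one_12 {T : I × I × I} (h1 : (T.1:ℝ) = 1) (h2 : (T.2.1:ℝ) = 1) : gam T = 1 :=
  le_antisymm (gam_le_one T) (le_min (by rw [h1]; exact le_max_left _ _)
    (le_min (by rw [h2]; exact le_max_left _ _) (by rw [h1]; exact le_max_left _ _)))

lemma gam_eq_one_23 {T : I × I × I} (h2 : (T.2.1:ℝ) = 1) (h3 : (T.2.2:ℝ) = 1) : gam T = 1 :=
  le_antisymm (gam_le_one T) (le_min (by rw [h2]; exact le_max_right _ _)
    (le_min (by rw [h2]; exact le_max_left _ _) (by rw [h3]; exact le_max_right _ _)))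

lemma gam_eq_one_13 {T : I × I × I} (h1 : (T.1:ℝ) = 1) (h3 : (T.2.2:ℝ) = 1) : gam T = 1 :=
  le_antisymm (gam_le_one T) (le_min (by rw [h1]; exact le_max_left _ _)
    (le_min (by rw [h3]; exact le_max_right _ _) (by rw [h1]; exact le_max_left _ _)))

lemma gam_corner {T : I × I × I} (h : SS T = 0) : gam T = 0 ∨ gam T = 1 := by
  obtain ⟨h1, h2, h3⟩ := SS_zero h
  rcases phi_zero_cases h1 with h1 | h1 <;> rcases phi_zero_cases h2 with h2 | h2 <;>
    rcases phi_zero_cases h3 with h3 | h3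
  · exact Or.inl (gam_eq_zero_12 h1 h2)
  · exact Or.inl (gam_eq_zero_12 h1 h2)
  · exact Or.inl (gam_eq_zero_13 h1 h3)
  · exact Or.inr (gam_eq_one_23 h2 h3)
  · exact Or.inl (gam_eq_zero_23 h2 h3)
  · exact Or.inr (gam_eq_one_13 h1 h3)
  · exact Or.inr (gam_eq_one_12 h1 h2)
  · exact Or.inr (gam_eq_one_12 h1 h2)

def betg (ph : I × I × I → ℝ) (T : I × I × I) : ℝ := if SS T = 0 then 0 else ph T / SS T

lemma betg_nonneg (ph : I × I × I → ℝ) (h0 : ∀ T, 0 ≤ ph T) (T : I × I × I) :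
    0 ≤ betg ph T := by
  unfold betg; split_ifs with h
  · exact le_refl 0
  · exact div_nonneg (h0 T) (SS_nonneg T)

lemma betg_le_one (ph : I × I × I → ℝ) (h1 : ∀ T, ph T ≤ SS T) (T : I × I × I) :
    betg ph T ≤ 1 := by
  unfold betg; split_ifs with h
  · norm_num
  · exact div_le_one_of_le₀ (h1 T) (SS_nonneg T)

lemma betg_zero (ph : I × I × I → ℝ) {T : I × I × I} (h : ph T = 0) : betg ph T = 0 := by
  unfold betg; split_ifs with h'
  · rfl
  · rw [h, zero_div]

lemma betg_sum {T : I × I × I} (h2 : phi T.2.1 = 0) (hS : SS T ≠ 0) :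
    betg (fun T => phi T.2.2) T + betg (fun T => phi T.1) T = 1 := by
  unfold betg
  rw [if_neg hS, if_neg hS, ← add_div,
    show phi T.2.2 + phi T.1 = SS T by unfold SS; linarith, div_self hS]

lemma betg_smul_cont {X : Type} [TopologicalSpace X] {ph : I × I × I → ℝ}
    (hphc : Continuous ph) (h0 : ∀ T, 0 ≤ ph T) (h1 : ∀ T, ph T ≤ SS T)
    {Ψ : X × (I × I × I) → E m} (hΨc : Continuous Ψ)
    (hΨ0 : ∀ p : X × (I × I × I), SS p.2 = 0 → Ψ p = 0) :
    Continuous fun p : X × (I × I × I) => betg ph p.2 • Ψ p := by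
  rw [continuous_iff_continuousAt]
  intro p0
  by_cases hS : SS p0.2 = 0
  · have hval : betg ph p0.2 • Ψ p0 = 0 := by rw [hΨ0 p0 hS, smul_zero]
    unfold ContinuousAt
    rw [show (fun p : X × (I × I × I) => betg ph p.2 • Ψ p) p0 = 0 from hval]
    apply squeeze_zero_norm (a := fun p : X × (I × I × I) => ‖Ψ p‖)
    · intro p
      rw [norm_smul, Real.norm_eq_abs, abs_of_nonneg (betg_nonneg ph h0 p.2)]
      exact mul_le_of_le_one_left (norm_nonneg _) (betg_le_one ph h1 p.2)
    · have h' := (hΨc.tendsto p0).norm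
      rwa [hΨ0 p0 hS, norm_zero] at h'
  · have hev : ∀ᶠ p : X × (I × I × I) in nhds p0,
        (fun p : X × (I × I × I) => (ph p.2 / SS p.2) • Ψ p) p
          = (fun p : X × (I × I × I) => betg ph p.2 • Ψ p) p := by
      have hopen : IsOpen {p : X × (I × I × I) | SS p.2 ≠ 0} :=
        isOpen_compl_singleton.preimage (SS_cont.comp continuous_snd)
      filter_upwards [hopen.mem_nhds hS] with p hp
      unfold betg; rw [if_neg hp]
    have hc : ContinuousAt (fun p : X × (I × I × I) => (ph p.2 / SS p.2) • Ψ p) p0 :=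
      (((hphc.comp continuous_snd).continuousAt).div
        ((SS_cont.comp continuous_snd).continuousAt) hS).smul hΨc.continuousAt
    exact hc.congr hev


/-! ### The vector fields of the construction -/

variable (pa pb pc : Q → ℝ → E m × E m)

def DV (pv : Q → ℝ → E m × E m) (p : Q × (I × I × I)) : E m :=
  (pv p.1 (gam p.2)).1 - (pv p.1 (gam p.2)).2

lemma DV_ne (pv : Q → ℝ → E m × E m) (hne : ∀ q s, (pv q s).1 ≠ (pv q s).2)
    (p : Q × (I × I × I)) : DV pv p ≠ 0 :=
  sub_ne_zero.mpr (hne _ _)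

lemma DV_cont (pv : Q → ℝ → E m × E m) (hc : Continuous fun z : Q × ℝ => pv z.1 z.2) :
    Continuous (DV (Q := Q) pv) := by
  have h : Continuous fun p : Q × (I × I × I) => pv p.1 (gam p.2) :=
    hc.comp (continuous_fst.prodMk (gam_cont.comp continuous_snd))
  exact h.fst.sub h.snd

def PsiF (p : Q × (I × I × I)) : E m := DV pb p - DV pa p - DV pc p

def dd1 (p : Q × (I × I × I)) : E m :=
  DV pc p + betg (fun T => phi T.2.2) p.2 • PsiF pa pb pc p

def dd2 (p : Q × (I × I × I)) : E m :=
  DV pa p + betg (fun T => phi T.1) p.2 • PsiF pa pb pc p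

def rho (T : I × I × I) : ℝ := ((T.1:ℝ) + (T.2.1:ℝ) + (T.2.2:ℝ)) / 3

lemma rho_cont : Continuous rho := by
  have c1 : Continuous fun T : I×I×I => (T.1:ℝ) := continuous_subtype_val.comp continuous_fst
  have c2 : Continuous fun T : I×I×I => (T.2.1:ℝ) :=
    continuous_subtype_val.comp (continuous_fst.comp continuous_snd)
  have c3 : Continuous fun T : I×I×I => (T.2.2:ℝ) :=
    continuous_subtype_val.comp (continuous_snd.comp continuous_snd)
  exact ((c1.add c2).add c3).div_const 3

def ybF (g2f : Q → E m) (y0 : E m) (p : Q × (I × I × I)) : E m :=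
  (1 - rho p.2) • g2f p.1 + rho p.2 • y0

def FF (g2f : Q → E m) (y0 : E m) (p : Q × (I × I × I)) : E m × E m × E m :=
  (ybF g2f y0 p + dd1 pa pb pc p, ybF g2f y0 p, ybF g2f y0 p - dd2 pa pb pc p)

/-- If the `gam`-value is a common endpoint, the defect field `PsiF` vanishes. -/
lemma PsiF_zero {g1f g2f g3f : Q → E m} {x0 y0 z0 : E m}
    (ha0 : ∀ q, pa q 0 = (g2f q, g3f q)) (hb0 : ∀ q, pb q 0 = (g1f q, g3f q))
    (hc0 : ∀ q, pc q 0 = (g1f q, g2f q))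
    (ha1 : ∀ q, pa q 1 = (y0, z0)) (hb1 : ∀ q, pb q 1 = (x0, z0))
    (hc1 : ∀ q, pc q 1 = (x0, y0))
    (p : Q × (I × I × I)) (h : gam p.2 = 0 ∨ gam p.2 = 1) : PsiF pa pb pc p = 0 := by
  unfold PsiF DV
  rcases h with h | h <;> rw [h]
  · rw [ha0 p.1, hb0 p.1, hc0 p.1]; dsimp only; abel
  · rw [ha1 p.1, hb1 p.1, hc1 p.1]; dsimp only; abel


lemma dd1_face {p : Q × (I × I × I)} (h : phi p.2.2.2 = 0) :
    dd1 pa pb pc p = DV pc p := by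
  unfold dd1; rw [betg_zero _ h, zero_smul, add_zero]

lemma dd2_face {p : Q × (I × I × I)} (h : phi p.2.1 = 0) :
    dd2 pa pb pc p = DV pa p := by
  unfold dd2; rw [betg_zero _ h, zero_smul, add_zero]

lemma dd1_of_psi0 {p : Q × (I × I × I)} (h : PsiF pa pb pc p = 0) :
    dd1 pa pb pc p = DV pc p := by
  unfold dd1; rw [h, smul_zero, add_zero]

lemma dd2_of_psi0 {p : Q × (I × I × I)} (h : PsiF pa pb pc p = 0) :
    dd2 pa pb pc p = DV pa p := by
  unfold dd2; rw [h, smul_zero, add_zero]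

lemma dd_sum_face {p : Q × (I × I × I)} (h2 : phi p.2.2.1 = 0) (hS : SS p.2 ≠ 0) :
    dd1 pa pb pc p + dd2 pa pb pc p = DV pb p := by
  unfold dd1 dd2
  have hsum := betg_sum (T := p.2) h2 hS
  calc DV pc p + betg (fun T => phi T.2.2) p.2 • PsiF pa pb pc p +
      (DV pa p + betg (fun T => phi T.1) p.2 • PsiF pa pb pc p)
      = DV pc p + DV pa p +
        (betg (fun T => phi T.2.2) p.2 + betg (fun T => phi T.1) p.2) • PsiF pa pb pc p := by
        rw [add_smul]; abel
    _ = DV pc p + DV pa p + PsiF pa pb pc p := by rw [hsum, one_smul]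
    _ = DV pb p := by unfold PsiF; abel

lemma DV_val0 {pv : Q → ℝ → E m × E m} {u v : Q → E m} (h0 : ∀ q, pv q 0 = (u q, v q))
    {p : Q × (I × I × I)} (h : gam p.2 = 0) : DV pv p = u p.1 - v p.1 := by
  unfold DV; rw [h, h0 p.1]

lemma DV_val1 {pv : Q → ℝ → E m × E m} {u v : E m} (h1 : ∀ q, pv q 1 = (u, v))
    {p : Q × (I × I × I)} (h : gam p.2 = 1) : DV pv p = u - v := by
  unfold DV; rw [h, h1 p.1]

lemma FF_cont (hca : Continuous fun z : Q × ℝ => pa z.1 z.2)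
    (hcb : Continuous fun z : Q × ℝ => pb z.1 z.2)
    (hcc : Continuous fun z : Q × ℝ => pc z.1 z.2)
    {g2f : Q → E m} (hg2 : Continuous g2f) (y0 : E m)
    (hΨ0 : ∀ p : Q × (I × I × I), SS p.2 = 0 → PsiF pa pb pc p = 0) :
    Continuous (FF pa pb pc g2f y0) := by
  have hDVa := DV_cont pa hca
  have hDVb := DV_cont pb hcb
  have hDVc := DV_cont pc hcc
  have hPsic : Continuous (PsiF pa pb pc) := (hDVb.sub hDVa).sub hDVc
  have hle3 : ∀ T : I × I × I, phi T.2.2 ≤ SS T := fun T => by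
    have := phi_nonneg T.1; have := phi_nonneg T.2.1; unfold SS; linarith
  have hle1 : ∀ T : I × I × I, phi T.1 ≤ SS T := fun T => by
    have := phi_nonneg T.2.1; have := phi_nonneg T.2.2; unfold SS; linarith
  have hb3 := betg_smul_cont (m := m) (phi_cont.comp (continuous_snd.comp continuous_snd))
      (fun T => phi_nonneg _) hle3 hPsic hΨ0
  have hb1 := betg_smul_cont (m := m) (phi_cont.comp continuous_fst)
      (fun T => phi_nonneg _) hle1 hPsic hΨ0
  have hd1 : Continuous (dd1 pa pb pc) := hDVc.add hb3
  have hd2 : Continuous (dd2 pa pb pc) := hDVa.add hb1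
  have hyb : Continuous (ybF g2f y0) :=
    ((continuous_const.sub (rho_cont.comp continuous_snd)).smul (hg2.comp continuous_fst)).add
      ((rho_cont.comp continuous_snd).smul continuous_const)
  exact (hyb.add hd1).prodMk (hyb.prodMk (hyb.sub hd2))

end HexAux

/-- **Lemma 2.4.**  If `G : Q → (ℝ^m)³ ∖ (Δ^{1=2} ∪ Δ^{2=3} ∪ Δ^{3=1})` composed
with each projection `pᵢ` forgetting the `i`-th point is null-homotopic, then there
is a hexagonal `∂I³`-homotopy `H` with `H_{(0,0,0)} = G` and `H_{(1,1,1)}` a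
constant map into `(ℝ^m)³ ∖ (Δ^{1=2} ∪ Δ^{2=3} ∪ Δ^{3=1})`. -/
theorem exists_hexagonal_boundary_cube_homotopy
    (m : ℕ) (Q : Type) [TopologicalSpace Q] [CompactSpace Q] [T2Space Q]
    (G : C(Q, Conf3 m))
    (h₁ : ((proj1 m).comp G).Nullhomotopic)
    (h₂ : ((proj2 m).comp G).Nullhomotopic)
    (h₃ : ((proj3 m).comp G).Nullhomotopic) :
    ∃ (H : C(Q × BdryCube, ThinDiagCompl m)) (c : Conf3 m),
      (∀ q, (H (q, corner0)).1 = (G q).1) ∧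
      (∀ q, (H (q, corner1)).1 = c.1) ∧
      IsHexagonal H := by
  classical
  rcases isEmpty_or_nonempty Q with hQ | hQne
  · -- `Q` is empty: use a constant map built from the nullhomotopy target.
    obtain ⟨cc, -⟩ := h₁
    obtain ⟨⟨p1, p2⟩, hp⟩ := cc
    have hp' : p1 ≠ p2 := hp
    have hd : p2 - p1 ≠ 0 := sub_ne_zero.mpr (Ne.symm hp')
    have hne2 : p2 ≠ p2 + (p2 - p1) := by
      intro h
      exact hd (add_eq_left.mp h.symm)
    have hne3 : p1 ≠ p2 + (p2 - p1) := by
      intro h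
      have hvv : (p2 - p1) + (p2 - p1) = 0 := by
        have h2 : p2 + (p2 - p1) - p1 = 0 := by rw [← h]; exact sub_self p1
        calc (p2 - p1) + (p2 - p1) = p2 + (p2 - p1) - p1 := by abel
          _ = 0 := h2
      have h2 : (2:ℝ) • (p2 - p1) = 0 := by rw [two_smul]; exact hvv
      rcases smul_eq_zero.mp h2 with h' | h'
      · norm_num at h'
      · exact hd h'
    refine ⟨ContinuousMap.const _ ⟨(p1, p2, p2 + (p2 - p1)), fun hcc => hp' hcc.1⟩,
      ⟨(p1, p2, p2 + (p2 - p1)), hp', hne2, hne3⟩,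
      fun q => isEmptyElim q, fun q => isEmptyElim q, ?_⟩
    exact ⟨fun q => isEmptyElim q, fun q => isEmptyElim q, fun q => isEmptyElim q,
      fun q => isEmptyElim q⟩
  · -- main case
    obtain ⟨q0⟩ := hQne
    obtain ⟨cA, ⟨hA⟩⟩ := h₁
    obtain ⟨cB, ⟨hB⟩⟩ := h₂
    obtain ⟨cC, ⟨hC⟩⟩ := h₃
    -- the three reparametrized homotopy tracks
    have hpa0 : ∀ q, HexAux.pear hA q0 q 0 = ((G q).val.2.1, (G q).val.2.2) := fun q => by
      rw [HexAux.pear_zero]; rfl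
    have hpb0 : ∀ q, HexAux.pear hB q0 q 0 = ((G q).val.1, (G q).val.2.2) := fun q => by
      rw [HexAux.pear_zero]; rfl
    have hpc0 : ∀ q, HexAux.pear hC q0 q 0 = ((G q).val.1, (G q).val.2.1) := fun q => by
      rw [HexAux.pear_zero]; rfl
    have hpa1 : ∀ q, HexAux.pear hA q0 q 1 = ((G q0).val.2.1, (G q0).val.2.2) := fun q => by
      rw [HexAux.pear_one]; rfl
    have hpb1 : ∀ q, HexAux.pear hB q0 q 1 = ((G q0).val.1, (G q0).val.2.2) := fun q => by
      rw [HexAux.pear_one]; rfl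
    have hpc1 : ∀ q, HexAux.pear hC q0 q 1 = ((G q0).val.1, (G q0).val.2.1) := fun q => by
      rw [HexAux.pear_one]; rfl
    have hpane : ∀ q s, (HexAux.pear hA q0 q s).1 ≠ (HexAux.pear hA q0 q s).2 :=
      HexAux.pear_ne hA q0
    have hpbne : ∀ q s, (HexAux.pear hB q0 q s).1 ≠ (HexAux.pear hB q0 q s).2 :=
      HexAux.pear_ne hB q0
    have hpcne : ∀ q s, (HexAux.pear hC q0 q s).1 ≠ (HexAux.pear hC q0 q s).2 :=
      HexAux.pear_ne hC q0
    have hPsi0 : ∀ p : Q × (I × I × I), (HexAux.gam p.2 = 0 ∨ HexAux.gam p.2 = 1) →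
        HexAux.PsiF (HexAux.pear hA q0) (HexAux.pear hB q0) (HexAux.pear hC q0) p = 0 :=
      HexAux.PsiF_zero _ _ _ hpa0 hpb0 hpc0 hpa1 hpb1 hpc1
    -- the three separation fields
    have hxne : ∀ q (T : I × I × I), ((T.2.2 : ℝ) = 0 ∨ (T.2.2 : ℝ) = 1) →
        HexAux.dd1 (HexAux.pear hA q0) (HexAux.pear hB q0) (HexAux.pear hC q0) (q, T) ≠ 0 := by
      intro q T h
      rw [HexAux.dd1_face _ _ _ (HexAux.phi_eq_zero h)]
      exact HexAux.DV_ne _ hpcne _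
    have hyne : ∀ q (T : I × I × I), ((T.1 : ℝ) = 0 ∨ (T.1 : ℝ) = 1) →
        HexAux.dd2 (HexAux.pear hA q0) (HexAux.pear hB q0) (HexAux.pear hC q0) (q, T) ≠ 0 := by
      intro q T h
      rw [HexAux.dd2_face _ _ _ (HexAux.phi_eq_zero h)]
      exact HexAux.DV_ne _ hpane _
    have hsumne : ∀ q (T : I × I × I), ((T.2.1 : ℝ) = 0 ∨ (T.2.1 : ℝ) = 1) →
        HexAux.dd1 (HexAux.pear hA q0) (HexAux.pear hB q0) (HexAux.pear hC q0) (q, T) +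
          HexAux.dd2 (HexAux.pear hA q0) (HexAux.pear hB q0) (HexAux.pear hC q0) (q, T) ≠ 0 := by
      intro q T h
      by_cases hS : HexAux.SS T = 0
      · have hg := HexAux.gam_corner hS
        have hps := hPsi0 (q, T) hg
        rw [HexAux.dd1_of_psi0 _ _ _ hps, HexAux.dd2_of_psi0 _ _ _ hps]
        rcases hg with hg | hg
        · rw [HexAux.DV_val0 hpc0 hg, HexAux.DV_val0 hpa0 hg]
          intro hcon
          apply sub_ne_zero.mpr ((G q).2).2.2
          calc (G q).val.1 - (G q).val.2.2
              = ((G q).val.1 - (G q).val.2.1) + ((G q).val.2.1 - (G q).val.2.2) := by abel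
            _ = 0 := hcon
        · rw [HexAux.DV_val1 hpc1 hg, HexAux.DV_val1 hpa1 hg]
          intro hcon
          apply sub_ne_zero.mpr ((G q0).2).2.2
          calc (G q0).val.1 - (G q0).val.2.2
              = ((G q0).val.1 - (G q0).val.2.1) + ((G q0).val.2.1 - (G q0).val.2.2) := by abel
            _ = 0 := hcon
      · rw [HexAux.dd_sum_face _ _ _ (HexAux.phi_eq_zero h) hS]
        exact HexAux.DV_ne _ hpbne _
    -- on the distinguished edges all three separations hold
    have hedge : ∀ q (T : I × I × I), (HexAux.gam T = 0 ∨ HexAux.gam T = 1) →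
        HexAux.dd1 (HexAux.pear hA q0) (HexAux.pear hB q0) (HexAux.pear hC q0) (q, T) ≠ 0 ∧
        HexAux.dd2 (HexAux.pear hA q0) (HexAux.pear hB q0) (HexAux.pear hC q0) (q, T) ≠ 0 ∧
        HexAux.dd1 (HexAux.pear hA q0) (HexAux.pear hB q0) (HexAux.pear hC q0) (q, T) +
          HexAux.dd2 (HexAux.pear hA q0) (HexAux.pear hB q0) (HexAux.pear hC q0) (q, T) ≠ 0 := by
      intro q T hg
      have hps := hPsi0 (q, T) hg
      rw [HexAux.dd1_of_psi0 _ _ _ hps, HexAux.dd2_of_psi0 _ _ _ hps]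
      rcases hg with hg | hg
      · rw [HexAux.DV_val0 hpc0 hg, HexAux.DV_val0 hpa0 hg]
        refine ⟨sub_ne_zero.mpr ((G q).2).1, sub_ne_zero.mpr ((G q).2).2.1, ?_⟩
        intro hcon
        apply sub_ne_zero.mpr ((G q).2).2.2
        calc (G q).val.1 - (G q).val.2.2
            = ((G q).val.1 - (G q).val.2.1) + ((G q).val.2.1 - (G q).val.2.2) := by abel
          _ = 0 := hcon
      · rw [HexAux.DV_val1 hpc1 hg, HexAux.DV_val1 hpa1 hg]
        refine ⟨sub_ne_zero.mpr ((G q0).2).1, sub_ne_zero.mpr ((G q0).2).2.1, ?_⟩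
        intro hcon
        apply sub_ne_zero.mpr ((G q0).2).2.2
        calc (G q0).val.1 - (G q0).val.2.2
            = ((G q0).val.1 - (G q0).val.2.1) + ((G q0).val.2.1 - (G q0).val.2.2) := by abel
          _ = 0 := hcon
    -- membership in the complement of the thin diagonal
    have hmem : ∀ p : Q × BdryCube,
        HexAux.FF (HexAux.pear hA q0) (HexAux.pear hB q0) (HexAux.pear hC q0)
          (fun q => (G q).val.2.1) ((G q0).val.2.1) (p.1, p.2.1) ∈ ThinDiagCompl m := by
      intro p
      rcases p.2.2 with h | h | h | h | h | h
      · -- t₁ = 0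
        intro hcon
        exact hyne p.1 p.2.1 (Or.inl (congrArg Subtype.val h))
          (sub_eq_self.mp hcon.2.symm)
      · intro hcon
        exact hyne p.1 p.2.1 (Or.inr (congrArg Subtype.val h))
          (sub_eq_self.mp hcon.2.symm)
      · -- t₂ = 0
        intro hcon
        apply hsumne p.1 p.2.1 (Or.inl (congrArg Subtype.val h))
        rw [add_eq_left.mp hcon.1, sub_eq_self.mp hcon.2.symm, add_zero]
      · intro hcon
        apply hsumne p.1 p.2.1 (Or.inr (congrArg Subtype.val h))
        rw [add_eq_left.mp hcon.1, sub_eq_self.mp hcon.2.symm, add_zero]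
      · -- t₃ = 0
        intro hcon
        exact hxne p.1 p.2.1 (Or.inl (congrArg Subtype.val h))
          (add_eq_left.mp hcon.1)
      · intro hcon
        exact hxne p.1 p.2.1 (Or.inr (congrArg Subtype.val h))
          (add_eq_left.mp hcon.1)
    -- the continuous map
    have hcontF : Continuous (HexAux.FF (HexAux.pear hA q0) (HexAux.pear hB q0)
        (HexAux.pear hC q0) (fun q => (G q).val.2.1) ((G q0).val.2.1)) := by
      refine HexAux.FF_cont _ _ _ (HexAux.pear_cont hA q0 fun q => rfl)
        (HexAux.pear_cont hB q0 fun q => rfl) (HexAux.pear_cont hC q0 fun q => rfl)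
        ((continuous_subtype_val.comp G.continuous).snd.fst) _ ?_
      exact fun p h => hPsi0 p (HexAux.gam_corner h)
    refine ⟨⟨fun p => ⟨HexAux.FF (HexAux.pear hA q0) (HexAux.pear hB q0) (HexAux.pear hC q0)
        (fun q => (G q).val.2.1) ((G q0).val.2.1) (p.1, p.2.1), hmem p⟩, ?_⟩,
      ⟨(G q0).val, (G q0).2⟩, ?_, ?_, ?_, ?_, ?_, ?_⟩
    · exact (hcontF.comp (continuous_fst.prodMk
        (continuous_subtype_val.comp continuous_snd))).subtype_mk _
    · -- value at the corner (0,0,0)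
      intro q
      have hg : HexAux.gam ((0:I), (0:I), (0:I)) = 0 := HexAux.gam_eq_zero_12 rfl rfl
      have hps := hPsi0 (q, ((0:I), (0:I), (0:I))) (Or.inl hg)
      have e1 := HexAux.dd1_of_psi0 (HexAux.pear hA q0) (HexAux.pear hB q0) (HexAux.pear hC q0) hps
      have e2 := HexAux.dd2_of_psi0 (HexAux.pear hA q0) (HexAux.pear hB q0) (HexAux.pear hC q0) hps
      have v1 := HexAux.DV_val0 hpc0 (p := (q, ((0:I), (0:I), (0:I)))) hg
      have v2 := HexAux.DV_val0 hpa0 (p := (q, ((0:I), (0:I), (0:I)))) hg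
      have hrho : HexAux.rho ((0:I), (0:I), (0:I)) = 0 := by
        unfold HexAux.rho; norm_num [show ((0:I):ℝ) = 0 from rfl]
      have hyb : HexAux.ybF (fun q => (G q).val.2.1) ((G q0).val.2.1) (q, ((0:I), (0:I), (0:I))) = (G q).val.2.1 := by
        unfold HexAux.ybF; rw [hrho]; simp
      show HexAux.FF (HexAux.pear hA q0) (HexAux.pear hB q0) (HexAux.pear hC q0) (fun q => (G q).val.2.1) ((G q0).val.2.1) (q, ((0:I), (0:I), (0:I))) = (G q).val
      unfold HexAux.FF
      rw [hyb, e1, e2, v1, v2]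
      have hGv : (G q).val = ((G q).val.1, (G q).val.2.1, (G q).val.2.2) := rfl
      rw [hGv]
      refine Prod.ext ?_ (Prod.ext ?_ ?_)
      · show (G q).val.2.1 + ((G q).val.1 - (G q).val.2.1) = (G q).val.1
        abel
      · rfl
      · show (G q).val.2.1 - ((G q).val.2.1 - (G q).val.2.2) = (G q).val.2.2
        abel
    · -- value at the corner (1,1,1)
      intro q
      have hg : HexAux.gam ((1:I), (1:I), (1:I)) = 1 := HexAux.gam_eq_one_12 rfl rfl
      have hps := hPsi0 (q, ((1:I), (1:I), (1:I))) (Or.inr hg)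
      have e1 := HexAux.dd1_of_psi0 (HexAux.pear hA q0) (HexAux.pear hB q0) (HexAux.pear hC q0) hps
      have e2 := HexAux.dd2_of_psi0 (HexAux.pear hA q0) (HexAux.pear hB q0) (HexAux.pear hC q0) hps
      have v1 := HexAux.DV_val1 hpc1 (p := (q, ((1:I), (1:I), (1:I)))) hg
      have v2 := HexAux.DV_val1 hpa1 (p := (q, ((1:I), (1:I), (1:I)))) hg
      have hrho : HexAux.rho ((1:I), (1:I), (1:I)) = 1 := by
        unfold HexAux.rho; norm_num [show ((1:I):ℝ) = 1 from rfl]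
      have hyb : HexAux.ybF (fun q => (G q).val.2.1) ((G q0).val.2.1) (q, ((1:I), (1:I), (1:I))) = (G q0).val.2.1 := by
        unfold HexAux.ybF; rw [hrho]; simp
      show HexAux.FF (HexAux.pear hA q0) (HexAux.pear hB q0) (HexAux.pear hC q0) (fun q => (G q).val.2.1) ((G q0).val.2.1) (q, ((1:I), (1:I), (1:I))) = (G q0).val
      unfold HexAux.FF
      rw [hyb, e1, e2, v1, v2]
      have hGv : (G q0).val = ((G q0).val.1, (G q0).val.2.1, (G q0).val.2.2) := rfl
      rw [hGv]
      refine Prod.ext ?_ (Prod.ext ?_ ?_)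
      · show (G q0).val.2.1 + ((G q0).val.1 - (G q0).val.2.1) = (G q0).val.1
        abel
      · rfl
      · show (G q0).val.2.1 - ((G q0).val.2.1 - (G q0).val.2.2) = (G q0).val.2.2
        abel
    · -- hexagonal: faces t₃ ∈ {0,1} avoid Δ^{1=2}
      intro q T h heq
      have heq' : HexAux.ybF (fun q => (G q).val.2.1) ((G q0).val.2.1) (q, T.1) + HexAux.dd1 (HexAux.pear hA q0) (HexAux.pear hB q0) (HexAux.pear hC q0) (q, T.1)
          = HexAux.ybF (fun q => (G q).val.2.1) ((G q0).val.2.1) (q, T.1) := heq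
      refine hxne q T.1 ?_ (add_eq_left.mp heq')
      rcases h with h | h
      · exact Or.inl (congrArg Subtype.val h)
      · exact Or.inr (congrArg Subtype.val h)
    · -- hexagonal: faces t₁ ∈ {0,1} avoid Δ^{2=3}
      intro q T h heq
      have heq' : HexAux.ybF (fun q => (G q).val.2.1) ((G q0).val.2.1) (q, T.1) - HexAux.dd2 (HexAux.pear hA q0) (HexAux.pear hB q0) (HexAux.pear hC q0) (q, T.1)
          = HexAux.ybF (fun q => (G q).val.2.1) ((G q0).val.2.1) (q, T.1) := heq.symm
      refine hyne q T.1 ?_ (sub_eq_self.mp heq')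
      rcases h with h | h
      · exact Or.inl (congrArg Subtype.val h)
      · exact Or.inr (congrArg Subtype.val h)
    · -- hexagonal: faces t₂ ∈ {0,1} avoid Δ^{3=1}
      intro q T h heq
      have heq' : HexAux.ybF (fun q => (G q).val.2.1) ((G q0).val.2.1) (q, T.1) + HexAux.dd1 (HexAux.pear hA q0) (HexAux.pear hB q0) (HexAux.pear hC q0) (q, T.1)
          = HexAux.ybF (fun q => (G q).val.2.1) ((G q0).val.2.1) (q, T.1) - HexAux.dd2 (HexAux.pear hA q0) (HexAux.pear hB q0) (HexAux.pear hC q0) (q, T.1) := heq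
      refine hsumne q T.1 ?_ ?_
      · rcases h with h | h
        · exact Or.inl (congrArg Subtype.val h)
        · exact Or.inr (congrArg Subtype.val h)
      · calc HexAux.dd1 (HexAux.pear hA q0) (HexAux.pear hB q0) (HexAux.pear hC q0) (q, T.1) + HexAux.dd2 (HexAux.pear hA q0) (HexAux.pear hB q0) (HexAux.pear hC q0) (q, T.1)
            = (HexAux.ybF (fun q => (G q).val.2.1) ((G q0).val.2.1) (q, T.1) + HexAux.dd1 (HexAux.pear hA q0) (HexAux.pear hB q0) (HexAux.pear hC q0) (q, T.1)) -
              (HexAux.ybF (fun q => (G q).val.2.1) ((G q0).val.2.1) (q, T.1) - HexAux.dd2 (HexAux.pear hA q0) (HexAux.pear hB q0) (HexAux.pear hC q0) (q, T.1)) := by abel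
          _ = 0 := by rw [heq']; exact sub_self _
    · -- hexagonal: distinguished edges land in the full configuration space
      intro q T h
      have hgam : HexAux.gam T.1 = 0 ∨ HexAux.gam T.1 = 1 := by
        rcases h with ⟨h1, h2⟩ | ⟨h1, h2⟩ | ⟨h1, h2⟩ | ⟨h1, h2⟩ | ⟨h1, h2⟩ | ⟨h1, h2⟩
        · exact Or.inl (HexAux.gam_eq_zero_12 (congrArg Subtype.val h1) (congrArg Subtype.val h2))
        · exact Or.inr (HexAux.gam_eq_one_12 (congrArg Subtype.val h1) (congrArg Subtype.val h2))
        · exact Or.inl (HexAux.gam_eq_zero_13 (congrArg Subtype.val h1) (congrArg Subtype.val h2))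
        · exact Or.inr (HexAux.gam_eq_one_13 (congrArg Subtype.val h1) (congrArg Subtype.val h2))
        · exact Or.inl (HexAux.gam_eq_zero_23 (congrArg Subtype.val h1) (congrArg Subtype.val h2))
        · exact Or.inr (HexAux.gam_eq_one_23 (congrArg Subtype.val h1) (congrArg Subtype.val h2))
      obtain ⟨e1, e2, e3⟩ := hedge q T.1 hgam
      refine ⟨?_, ?_, ?_⟩
      · intro heq
        have heq' : HexAux.ybF (fun q => (G q).val.2.1) ((G q0).val.2.1) (q, T.1) + HexAux.dd1 (HexAux.pear hA q0) (HexAux.pear hB q0) (HexAux.pear hC q0) (q, T.1)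
            = HexAux.ybF (fun q => (G q).val.2.1) ((G q0).val.2.1) (q, T.1) := heq
        exact e1 (add_eq_left.mp heq')
      · intro heq
        have heq' : HexAux.ybF (fun q => (G q).val.2.1) ((G q0).val.2.1) (q, T.1) - HexAux.dd2 (HexAux.pear hA q0) (HexAux.pear hB q0) (HexAux.pear hC q0) (q, T.1)
            = HexAux.ybF (fun q => (G q).val.2.1) ((G q0).val.2.1) (q, T.1) := heq.symm
        exact e2 (sub_eq_self.mp heq')
      · intro heq
        have heq' : HexAux.ybF (fun q => (G q).val.2.1) ((G q0).val.2.1) (q, T.1) + HexAux.dd1 (HexAux.pear hA q0) (HexAux.pear hB q0) (HexAux.pear hC q0) (q, T.1)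
            = HexAux.ybF (fun q => (G q).val.2.1) ((G q0).val.2.1) (q, T.1) - HexAux.dd2 (HexAux.pear hA q0) (HexAux.pear hB q0) (HexAux.pear hC q0) (q, T.1) := heq
        apply e3
        calc HexAux.dd1 (HexAux.pear hA q0) (HexAux.pear hB q0) (HexAux.pear hC q0) (q, T.1) + HexAux.dd2 (HexAux.pear hA q0) (HexAux.pear hB q0) (HexAux.pear hC q0) (q, T.1)
            = (HexAux.ybF (fun q => (G q).val.2.1) ((G q0).val.2.1) (q, T.1) + HexAux.dd1 (HexAux.pear hA q0) (HexAux.pear hB q0) (HexAux.pear hC q0) (q, T.1)) -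
              (HexAux.ybF (fun q => (G q).val.2.1) ((G q0).val.2.1) (q, T.1) - HexAux.dd2 (HexAux.pear hA q0) (HexAux.pear hB q0) (HexAux.pear hC q0) (q, T.1)) := by abel
          _ = 0 := by rw [heq']; exact sub_self _
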